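/- Let P be a directed family of sequences p with p_i ≥ 1, and A(P) the Köthe algebra λ(P) with multiplication e_i e_j = e_{min(i,j)}. Suppose A(P) has a bounded approximate identity. Then there exists a bounded sequence (x_n) in A(P) such that ℓ(x_n) → ∞ and inf_n w(x_n) > 0, where w(a) = ∑_i |a_i| and ℓ(a) = min{k : a_k ≠ 0} for a ≠ 0. -/
import Mathlib


/-- The Köthe sequence space `λ(P)` as a subspace of `ℕ → ℂ`. -/
noncomputable def kothe (P : Set (ℕ → ℝ)) (hP : ∀ p ∈ P, ∀ i, (1 : ℝ) ≤ p i) :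
    Submodule ℂ (ℕ → ℂ) where
  carrier := {a | ∀ p ∈ P, Summable fun i => ‖a i‖ * p i}
  zero_mem' := by intro p hp; simpa using summable_zero
  add_mem' := by
    intro a b ha hb p hp
    refine Summable.of_nonneg_of_le
      (fun i => mul_nonneg (norm_nonneg _)
        (le_trans zero_le_one (hP p hp i))) (fun i => ?_) ((ha p hp).add (hb p hp))
    have := mul_le_mul_of_nonneg_right (norm_add_le ((a : ℕ → ℂ) i) (b i))
      (le_trans zero_le_one (hP p hp i))
    simpa [add_mul] using this
  smul_mem' := by
    intro c a ha p hp
    have := (ha p hp).mul_left ‖c‖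
    refine this.congr fun i => ?_
    simp [norm_smul, mul_assoc]

/-- The `i`-th standard unit vector as an element of `λ(P)`. -/
noncomputable def kotheE (P : Set (ℕ → ℝ)) (hP : ∀ p ∈ P, ∀ i, (1 : ℝ) ≤ p i)
    (i : ℕ) : kothe P hP :=
  ⟨Pi.single i 1, by
    intro p hp
    refine summable_of_ne_finset_zero (s := {i}) fun j hj => ?_
    rw [Pi.single_eq_of_ne (by simpa using hj)]
    simp⟩

/-- The seminorm `‖a‖_p = ∑ᵢ |aᵢ| pᵢ` (as a real-valued expression). -/
noncomputable def kNorm (p : ℕ → ℝ) (a : ℕ → ℂ) : ℝ := ∑' i, ‖a i‖ * p i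

open Filter

/-- If the Köthe algebra `A(P)` has a bounded approximate identity, then there is a
bounded sequence `(x_n)` in `λ(P)` with `ℓ(x_n) → ∞` and `inf_n w(x_n) > 0`. -/
theorem stmt14 (P : Set (ℕ → ℝ)) (hP : ∀ p ∈ P, ∀ i, (1 : ℝ) ≤ p i)
    (hdir : ∀ p ∈ P, ∀ q ∈ P, ∃ r ∈ P, ∀ i, max (p i) (q i) ≤ r i)
    (M : kothe P hP →ₗ[ℂ] kothe P hP →ₗ[ℂ] kothe P hP)
    (hMe : ∀ i j : ℕ, M (kotheE P hP i) (kotheE P hP j) = kotheE P hP (min i j))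
    (hMsub : ∀ p ∈ P, ∀ a b : kothe P hP,
      kNorm p (M a b : ℕ → ℂ) ≤ kNorm p (a : ℕ → ℂ) * kNorm p (b : ℕ → ℂ))
    -- `A(P)` has a bounded approximate identity:
    (hbai : ∃ (ι : Type) (pr : Preorder ι),
      (∀ x y : ι, ∃ z, pr.le x z ∧ pr.le y z) ∧ Nonempty ι ∧
      ∃ u : ι → kothe P hP,
        (∀ p ∈ P, ∃ C : ℝ, ∀ i, kNorm p (u i : ℕ → ℂ) ≤ C) ∧
        ∀ a : kothe P hP, ∀ p ∈ P,
          Tendsto (fun i => kNorm p ((a - M a (u i) : kothe P hP) : ℕ → ℂ))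
            (@Filter.atTop ι pr) (nhds 0)) :
    ∃ x : ℕ → kothe P hP,
      -- boundedness in each seminorm
      (∀ p ∈ P, ∃ C : ℝ, ∀ n, kNorm p (x n : ℕ → ℂ) ≤ C) ∧
      -- `ℓ(x_n) → ∞`
      (∀ N : ℕ, ∃ N₀ : ℕ, ∀ n ≥ N₀, ∀ k < N, (x n : ℕ → ℂ) k = 0) ∧
      -- `inf_n w(x_n) > 0`
      (∃ δ > (0 : ℝ), ∀ n, δ ≤ ∑' k, ‖(x n : ℕ → ℂ) k‖) := by

  classical
  rcases P.eq_empty_or_nonempty with rfl | ⟨p0, hp0⟩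
  · -- trivial case: P = ∅, take x n = e_n
    refine ⟨fun n => kotheE ∅ hP n, ?_, ?_, ?_⟩
    · intro p hp; exact absurd hp (by simp)
    · intro N
      refine ⟨N, fun n hn k hk => ?_⟩
      have : k ≠ n := by omega
      simp [kotheE, Pi.single_eq_of_ne this]
    · refine ⟨1, one_pos, fun n => ?_⟩
      have : ∑' k, ‖(kotheE ∅ hP n : ℕ → ℂ) k‖ = 1 := by
        rw [tsum_eq_single n (fun b hb => by
          simp [kotheE, Pi.single_eq_of_ne hb])]
        simp [kotheE]
      rw [this]
  -- main case
  have hp01 : ∀ i, 1 ≤ p0 i := hP p0 hp0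
  have hp00 : ∀ i, 0 ≤ p0 i := fun i => le_trans zero_le_one (hp01 i)
  have hsum : ∀ a : kothe P hP, Summable fun i => ‖(a : ℕ → ℂ) i‖ * p0 i :=
    fun a => a.2 p0 hp0
  have hsumn : ∀ a : kothe P hP, Summable fun i => ‖(a : ℕ → ℂ) i‖ := by
    intro a
    refine Summable.of_nonneg_of_le (fun i => norm_nonneg _) (fun i => ?_) (hsum a)
    exact le_mul_of_one_le_right (norm_nonneg _) (hp01 i)
  have hwle : ∀ a : kothe P hP, (∑' i, ‖(a : ℕ → ℂ) i‖) ≤ kNorm p0 (a : ℕ → ℂ) := by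
    intro a
    exact Summable.tsum_le_tsum (fun i => le_mul_of_one_le_right (norm_nonneg _) (hp01 i))
      (hsumn a) (hsum a)
  have habs : ∀ a : kothe P hP, ∀ k, ‖(a : ℕ → ℂ) k‖ ≤ kNorm p0 (a : ℕ → ℂ) := by
    intro a k
    refine le_trans (le_mul_of_one_le_right (norm_nonneg _) (hp01 k)) ?_
    exact Summable.le_tsum (hsum a) k (fun j _ => mul_nonneg (norm_nonneg _) (hp00 j))
  -- the difference elements d n = e_n - e_{n+1}
  set d : ℕ → kothe P hP := fun n => kotheE P hP n - kotheE P hP (n + 1) with hd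
  have hdco : ∀ n k, (d n : ℕ → ℂ) k = (Pi.single n 1 : ℕ → ℂ) k - (Pi.single (n+1) 1 : ℕ → ℂ) k := by
    intro n k; rfl
  have hdn : ∀ n, (d n : ℕ → ℂ) n = 1 := by
    intro n
    rw [hdco, Pi.single_eq_same, Pi.single_eq_of_ne (by omega : n ≠ n + 1)]
    ring
  have hMdE : ∀ n j, M (d n) (kotheE P hP j) = if n < j then d n else 0 := by
    intro n j
    have : M (d n) (kotheE P hP j)
        = kotheE P hP (min n j) - kotheE P hP (min (n+1) j) := by
      rw [hd]
      simp only [map_sub, LinearMap.sub_apply, hMe]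
    rw [this]
    by_cases h : n < j
    · rw [if_pos h, min_eq_left (by omega), min_eq_left (by omega)]
    · rw [if_neg h, min_eq_right (by omega), min_eq_right (by omega), sub_self]
  -- partial sums
  set s : kothe P hP → ℕ → kothe P hP :=
    fun b m => ∑ j ∈ Finset.range m, ((b : ℕ → ℂ) j) • kotheE P hP j with hs
  have hsco : ∀ b m k, ((s b m : kothe P hP) : ℕ → ℂ) k
      = if k < m then (b : ℕ → ℂ) k else 0 := by
    intro b m k
    rw [hs]
    push_cast
    rw [Finset.sum_apply]
    by_cases h : k < m
    · rw [if_pos h, Finset.sum_eq_single k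
        (fun j _ hj => by
          simp [kotheE, Pi.single_eq_of_ne (Ne.symm hj)])
        (fun hk => absurd (Finset.mem_range.2 h) hk)]
      simp [kotheE]
    · rw [if_neg h]
      refine Finset.sum_eq_zero fun j hj => ?_
      have hkj : k ≠ j := by
        have := Finset.mem_range.1 hj; omega
      simp [kotheE, Pi.single_eq_of_ne hkj]
  -- tail estimate: kNorm p0 (b - s b m) → 0
  have htail : ∀ b : kothe P hP,
      Tendsto (fun m => kNorm p0 ((b - s b m : kothe P hP) : ℕ → ℂ)) atTop (nhds 0) := by
    intro b
    have hval : ∀ m, kNorm p0 ((b - s b m : kothe P hP) : ℕ → ℂ)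
        = (∑' i, ‖(b : ℕ → ℂ) i‖ * p0 i) - ∑ j ∈ Finset.range m, ‖(b : ℕ → ℂ) j‖ * p0 j := by
      intro m
      have hco : ∀ k, ((b - s b m : kothe P hP) : ℕ → ℂ) k
          = if k < m then 0 else (b : ℕ → ℂ) k := by
        intro k
        have : ((b - s b m : kothe P hP) : ℕ → ℂ) k = (b : ℕ → ℂ) k - ((s b m : kothe P hP) : ℕ → ℂ) k := rfl
        rw [this, hsco]
        by_cases h : k < m <;> simp [h]
      have h1 : (fun k => ‖((b - s b m : kothe P hP) : ℕ → ℂ) k‖ * p0 k)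
          = fun k => (if k < m then 0 else ‖(b : ℕ → ℂ) k‖ * p0 k) := by
        funext k
        rw [hco]
        by_cases h : k < m <;> simp [h]
      have hg : Summable (fun k => if k < m then 0 else ‖(b : ℕ → ℂ) k‖ * p0 k) := by
        refine Summable.of_nonneg_of_le (fun k => ?_) (fun k => ?_) (hsum b)
        · by_cases h : k < m <;> simp only [if_pos, if_neg, h] <;>
            first
            | exact mul_nonneg (norm_nonneg _) (hp00 k)
            | exact le_refl ((0:ℝ))
        · by_cases h : k < m <;> simp only [if_pos, if_neg, h] <;>
            first
            | exact mul_nonneg (norm_nonneg _) (hp00 k)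
            | exact le_refl _
      have hh : (∑' k, (if k < m then ‖(b : ℕ → ℂ) k‖ * p0 k else 0))
          = ∑ j ∈ Finset.range m, ‖(b : ℕ → ℂ) j‖ * p0 j := by
        rw [tsum_eq_sum (s := Finset.range m)]
        · exact Finset.sum_congr rfl fun j hj => if_pos (Finset.mem_range.1 hj)
        · intro j hj
          exact if_neg (fun h => hj (Finset.mem_range.2 h))
      have hsplit : (∑' k, (if k < m then 0 else ‖(b : ℕ → ℂ) k‖ * p0 k))
            + (∑' k, (if k < m then ‖(b : ℕ → ℂ) k‖ * p0 k else 0))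
          = ∑' i, ‖(b : ℕ → ℂ) i‖ * p0 i := by
        rw [← Summable.tsum_add hg]
        · refine tsum_congr fun k => ?_
          by_cases h : k < m <;> simp [h]
        · refine Summable.of_nonneg_of_le (fun k => ?_) (fun k => ?_) (hsum b) <;>
            by_cases h : k < m <;> simp only [if_pos, if_neg, h] <;>
            first
            | exact mul_nonneg (norm_nonneg _) (hp00 k)
            | exact le_refl _
      rw [kNorm, h1, ← hh, ← hsplit]
      ring
    simp only [hval]
    have := ((hsum b).hasSum.tendsto_sum_nat).const_sub (∑' i, ‖(b : ℕ → ℂ) i‖ * p0 i)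
    simpa using this
  -- key coordinate formula
  have key : ∀ (n : ℕ) (b : kothe P hP),
      (M (d n) b : ℕ → ℂ) n = ∑' j, (if n < j then (b : ℕ → ℂ) j else 0) := by
    intro n b
    set L : ℕ → ℂ := fun m => (M (d n) (s b m) : ℕ → ℂ) n with hL
    have hLval : ∀ m, L m = ∑ j ∈ Finset.range m, (if n < j then (b : ℕ → ℂ) j else 0) := by
      intro m
      have : M (d n) (s b m)
          = ∑ j ∈ Finset.range m, ((b : ℕ → ℂ) j) • (if n < j then d n else 0) := by
        rw [hs]
        simp only [map_sum, map_smul, hMdE]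
      show ((M (d n) (s b m) : kothe P hP) : ℕ → ℂ) n = _
      rw [this]
      push_cast
      rw [Finset.sum_apply]
      refine Finset.sum_congr rfl fun j hj => ?_
      by_cases h : n < j
      · simp [h, hdn n]
      · simp [h]
    have hbs : Summable fun j => (if n < j then (b : ℕ → ℂ) j else 0) := by
      apply Summable.of_norm
      refine Summable.of_nonneg_of_le (fun j => norm_nonneg _) (fun j => ?_) (hsumn b)
      by_cases h : n < j <;> simp [h]
    have hL1 : Tendsto L atTop (nhds (∑' j, (if n < j then (b : ℕ → ℂ) j else 0))) := by
      have := hbs.hasSum.tendsto_sum_nat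
      refine this.congr fun m => (hLval m).symm
    have hL2 : Tendsto L atTop (nhds ((M (d n) b : ℕ → ℂ) n)) := by
      rw [tendsto_iff_norm_sub_tendsto_zero]
      have hb : ∀ m, ‖L m - (M (d n) b : ℕ → ℂ) n‖
          ≤ kNorm p0 (d n : ℕ → ℂ) * kNorm p0 ((b - s b m : kothe P hP) : ℕ → ℂ) := by
        intro m
        have h1 : L m - (M (d n) b : ℕ → ℂ) n = - ((M (d n) (b - s b m) : ℕ → ℂ) n) := by
          rw [hL]
          have : M (d n) (b - s b m) = M (d n) b - M (d n) (s b m) := by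
            rw [map_sub]
          rw [this]
          have : ((M (d n) b - M (d n) (s b m) : kothe P hP) : ℕ → ℂ) n
              = (M (d n) b : ℕ → ℂ) n - (M (d n) (s b m) : ℕ → ℂ) n := rfl
          rw [this]; ring
        rw [h1, norm_neg]
        refine le_trans (habs _ n) ?_
        exact hMsub p0 hp0 (d n) (b - s b m)
      have h0 : Tendsto (fun m => kNorm p0 (d n : ℕ → ℂ)
          * kNorm p0 ((b - s b m : kothe P hP) : ℕ → ℂ)) atTop (nhds 0) := by
        have := (htail b).const_mul (kNorm p0 (d n : ℕ → ℂ))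
        simpa using this
      exact squeeze_zero (fun m => norm_nonneg _) hb h0
    exact tendsto_nhds_unique hL2 hL1
  -- extract the approximate identity
  obtain ⟨ι, pr, hdirι, hne, u, hubd, happ⟩ := hbai
  letI := pr
  haveI : Nonempty ι := hne
  haveI : IsDirected ι (· ≤ ·) := ⟨fun a b => hdirι a b⟩
  haveI : (Filter.atTop (α := ι)).NeBot := Filter.atTop_neBot
  -- choose indices
  have hchoice : ∀ n : ℕ, ∃ i : ι,
      kNorm p0 ((d n - M (d n) (u i) : kothe P hP) : ℕ → ℂ) < 1/2 := by
    intro n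
    have := happ (d n) p0 hp0
    have hev : ∀ᶠ i in Filter.atTop (α := ι),
        kNorm p0 ((d n - M (d n) (u i) : kothe P hP) : ℕ → ℂ) < 1/2 := by
      refine this.eventually (Filter.Tendsto.eventually_lt_const (by norm_num) tendsto_id)
    exact hev.exists
  choose lam hlam using hchoice
  -- the sequence x
  have hxmem : ∀ n : ℕ, (fun j => if n < j then (u (lam n) : ℕ → ℂ) j else 0) ∈ kothe P hP := by
    intro n p hp
    refine Summable.of_nonneg_of_le (fun j => ?_) (fun j => ?_) ((u (lam n)).2 p hp)
    · by_cases h : n < j <;> simp only [if_pos, if_neg, h] <;>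
        first
        | exact mul_nonneg (norm_nonneg _) (le_trans zero_le_one (hP p hp j))
        | simp
    · by_cases h : n < j <;> simp only [if_pos, if_neg, h]
      · exact le_refl _
      · simp
        exact mul_nonneg (norm_nonneg _) (le_trans zero_le_one (hP p hp j))
  refine ⟨fun n => ⟨fun j => if n < j then (u (lam n) : ℕ → ℂ) j else 0, hxmem n⟩, ?_, ?_, ?_⟩
  · -- boundedness
    intro p hp
    obtain ⟨C, hC⟩ := hubd p hp
    refine ⟨C, fun n => le_trans ?_ (hC (lam n))⟩
    refine Summable.tsum_le_tsum (fun j => ?_) (hxmem n p hp) ((u (lam n)).2 p hp)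
    by_cases h : n < j <;> simp only [if_pos, if_neg, h]
    · exact le_refl _
    · simp
      exact mul_nonneg (norm_nonneg _) (le_trans zero_le_one (hP p hp j))
  · -- ℓ(x_n) → ∞
    intro N
    refine ⟨N, fun n hn k hk => ?_⟩
    have : ¬ n < k := by omega
    simp [this]
  · -- lower bound on w
    refine ⟨1/2, by norm_num, fun n => ?_⟩
    set S : ℂ := ∑' j, (if n < j then (u (lam n) : ℕ → ℂ) j else 0) with hS
    have h1 : ‖(1 : ℂ) - S‖ < 1/2 := by
      have hco : ((d n - M (d n) (u (lam n)) : kothe P hP) : ℕ → ℂ) n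
          = (d n : ℕ → ℂ) n - (M (d n) (u (lam n)) : ℕ → ℂ) n := rfl
      have := lt_of_le_of_lt (habs (d n - M (d n) (u (lam n))) n) (hlam n)
      rw [hco, hdn, key n (u (lam n)), ← hS] at this
      exact this
    have h2 : (1/2 : ℝ) ≤ ‖S‖ := by
      have : (1 : ℝ) = ‖(1 : ℂ)‖ := by simp
      nlinarith [norm_sub_norm_le (1 : ℂ) S, h1, norm_nonneg S]
    refine le_trans h2 ?_
    have hsn : Summable fun j => ‖(if n < j then (u (lam n) : ℕ → ℂ) j else 0)‖ := by
      refine Summable.of_nonneg_of_le (fun j => norm_nonneg _) (fun j => ?_) (hsumn (u (lam n)))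
      by_cases h : n < j <;> simp [h]
    exact le_trans (norm_tsum_le_tsum_norm hsn) (le_of_eq rfl)
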